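/- Let (X,Y,Z) : I → ℝ³ be a solution of the system (S) on an interval I unbounded above, with X(η) > 0 and Z(η) ≥ 0 for all η ∈ I, and suppose (X,Y,Z)(η) → P0^λ = (0, λ, −λ² − (β/α)λ) as η → +∞ for some λ ∈ (−β/α, −β/(2α)). Then Y(η) < −β/(2α) for every η ∈ I. -/

import Mathlib

open Real Set Filter Topology

/-- The self-similar exponent `α = (σ+2)/((σ-2)(m-1))`. -/
noncomputable def ssAlpha (m σ : ℝ) : ℝ := (σ + 2) / ((σ - 2) * (m - 1))

/-- The self-similar exponent `β = 2/(σ-2)`. -/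
noncomputable def ssBeta (σ : ℝ) : ℝ := 2 / (σ - 2)

/-- `(X,Y,Z)` satisfies the quadratic system (S) at time `η`:
`X' = X((m−1)Y − 2X)`, `Y' = −Y² − (β/α)Y + X − XY − Z`, `Z' = (σ−2)XZ`. -/
def SysAt (m σ : ℝ) (X Y Z : ℝ → ℝ) (η : ℝ) : Prop :=
  HasDerivAt X (X η * ((m - 1) * Y η - 2 * X η)) η ∧
  HasDerivAt Y (-(Y η) ^ 2 - ssBeta σ / ssAlpha m σ * Y η + X η - X η * Y η - Z η) η ∧
  HasDerivAt Z ((σ - 2) * X η * Z η) η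

/-- The equilibrium `P0^λ = (0, λ, −λ² − (β/α)λ)` on the critical parabola. -/
noncomputable def P0pt (m σ l : ℝ) : ℝ × ℝ × ℝ :=
  (0, l, -l ^ 2 - ssBeta σ / ssAlpha m σ * l)

/-- The equilibrium `P2 = ((m−1)/(2(m+1)α), 1/((m+1)α), 0)`. -/
noncomputable def P2pt (m σ : ℝ) : ℝ × ℝ × ℝ :=
  ((m - 1) / (2 * (m + 1) * ssAlpha m σ), 1 / ((m + 1) * ssAlpha m σ), 0)

/-- an orbit with `X > 0`, `Z ≥ 0` converging as `η → +∞` to a point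
`P0^λ` with `λ ∈ (−β/α, −β/(2α))` stays forever in the half-space `{Y < −β/(2α)}`. -/
theorem orbit_to_lower_parabola_stays_below
    (m σ : ℝ) (hm1 : 1 < m) (hm2 : m < 2) (hσ : 2 < σ)
    (a l : ℝ)
    (hl1 : -(ssBeta σ / ssAlpha m σ) < l)
    (hl2 : l < -(ssBeta σ / (2 * ssAlpha m σ)))
    (X Y Z : ℝ → ℝ)
    (hsol : ∀ η ∈ Ici a, SysAt m σ X Y Z η)
    (hX : ∀ η ∈ Ici a, 0 < X η)
    (hZ : ∀ η ∈ Ici a, 0 ≤ Z η)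
    (hlim : Tendsto (fun η => (X η, Y η, Z η)) atTop (𝓝 (P0pt m σ l))) :
    ∀ η ∈ Ici a, Y η < -(ssBeta σ / (2 * ssAlpha m σ)) := by
  have hA : 0 < ssAlpha m σ := by
    unfold ssAlpha
    apply div_pos (by linarith) (mul_pos (by linarith) (by linarith))
  have hB : 0 < ssBeta σ := div_pos two_pos (by linarith)
  set u : ℝ := ssBeta σ / (2 * ssAlpha m σ) with hu_def
  have hu : 0 < u := div_pos hB (by linarith)
  have hBA : ssBeta σ / ssAlpha m σ = 2 * u := by
    rw [hu_def]; field_simp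
  set c : ℝ := -u with hc_def
  -- limits of components
  have hYlim : Tendsto Y atTop (𝓝 l) := by
    have := ((continuous_fst.comp continuous_snd).continuousAt
      (x := P0pt m σ l)).tendsto.comp hlim
    simpa [P0pt, Function.comp_def] using this
  have hZlim : Tendsto Z atTop (𝓝 (-l ^ 2 - ssBeta σ / ssAlpha m σ * l)) := by
    have := ((continuous_snd.comp continuous_snd).continuousAt
      (x := P0pt m σ l)).tendsto.comp hlim
    simpa [P0pt, Function.comp_def] using this
  -- Z is monotone on Ici a, hence bounded by its limit
  have hZmono : MonotoneOn Z (Ici a) := by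
    apply monotoneOn_of_deriv_nonneg (convex_Ici a)
    · exact fun x hx => ((hsol x hx).2.2).continuousAt.continuousWithinAt
    · intro x hx
      rw [interior_Ici] at hx
      exact ((hsol x (mem_Ici.mpr hx.le)).2.2).differentiableAt.differentiableWithinAt
    · intro x hx
      rw [interior_Ici] at hx
      rw [((hsol x (mem_Ici.mpr hx.le)).2.2).deriv]
      exact mul_nonneg (mul_nonneg (by linarith) (hX x (mem_Ici.mpr hx.le)).le) (hZ x (mem_Ici.mpr hx.le))
  have hZle : ∀ η ∈ Ici a, Z η ≤ -l ^ 2 - ssBeta σ / ssAlpha m σ * l := by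
    intro η hη
    apply ge_of_tendsto hZlim
    filter_upwards [eventually_ge_atTop η] with η' hη'
    exact hZmono hη (le_trans hη hη') hη'
  -- main argument by contradiction
  by_contra hcon
  push_neg at hcon
  obtain ⟨η₀, hη₀a, hη₀Y⟩ := hcon
  -- the set where Y ≥ c, after η₀
  set S : Set ℝ := {η | η₀ ≤ η ∧ c ≤ Y η} with hS_def
  have hη₀S : η₀ ∈ S := ⟨le_refl _, hη₀Y⟩
  have hlc : l < c := hl2
  obtain ⟨B, hB'⟩ : ∃ B, ∀ η ≥ B, Y η < c := by
    have : ∀ᶠ η in atTop, Y η < c := hYlim.eventually (eventually_lt_nhds hlc)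
    exact eventually_atTop.mp this
  have hbdd : BddAbove S := by
    refine ⟨B, fun s hs => ?_⟩
    by_contra hsB
    push_neg at hsB
    exact absurd hs.2 (not_le.mpr (hB' s hsB.le))
  set t : ℝ := sSup S with ht_def
  have hη₀t : η₀ ≤ t := le_csSup hbdd hη₀S
  have hta : t ∈ Ici a := le_trans hη₀a hη₀t
  have hcontY : ContinuousAt Y t := (hsol t hta).2.1.continuousAt
  -- after t, Y < c
  have hafter : ∀ η, t < η → Y η < c := by
    intro η hη
    by_contra h
    push_neg at h
    have : η ∈ S := ⟨le_trans hη₀t hη.le, h⟩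
    exact absurd (le_csSup hbdd this) (not_le.mpr hη)
  -- Y t ≥ c since t is in the closure of S
  have htcl : t ∈ closure S := csSup_mem_closure ⟨η₀, hη₀S⟩ hbdd
  have hne : (𝓝[S] t).NeBot := mem_closure_iff_nhdsWithin_neBot.mp htcl
  have hYt_ge : c ≤ Y t := by
    refine ge_of_tendsto (hcontY.continuousWithinAt (s := S)) ?_
    filter_upwards [self_mem_nhdsWithin] with x hx
    exact hx.2
  -- Y t ≤ c by right continuity
  have hYt_le : Y t ≤ c := by
    refine le_of_tendsto (hcontY.continuousWithinAt (s := Ioi t)) ?_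
    filter_upwards [self_mem_nhdsWithin] with x hx
    exact (hafter x hx).le
  have hYt : Y t = c := le_antisymm hYt_le hYt_ge
  -- the derivative of Y at t is positive
  have hXt : 0 < X t := hX t hta
  have hZt : Z t ≤ -l ^ 2 - ssBeta σ / ssAlpha m σ * l := hZle t hta
  have hder := (hsol t hta).2.1
  set d : ℝ := -(Y t) ^ 2 - ssBeta σ / ssAlpha m σ * Y t + X t - X t * Y t - Z t with hd_def
  have hd : 0 < d := by
    rw [hd_def, hYt, hc_def, hBA]
    rw [hBA] at hZt
    have hsq : 0 < (l + u) ^ 2 := by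
      have : l + u ≠ 0 := by intro h; rw [hc_def] at hlc; nlinarith
      positivity
    nlinarith [mul_pos hXt hu]
  -- derivative positive at t contradicts Y < c after t
  have hslope : Tendsto (slope Y t) (𝓝[>] t) (𝓝 d) :=
    (hasDerivAt_iff_tendsto_slope.mp hder).mono_left
      (nhdsWithin_mono t (fun x hx => by simpa using hx.ne'))
  have hev : ∀ᶠ η in 𝓝[>] t, 0 < slope Y t η := hslope.eventually (eventually_gt_nhds hd)
  obtain ⟨η, hpos, hηt⟩ := (hev.and self_mem_nhdsWithin).exists
  have hηt' : t < η := hηt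
  have h1 : 0 < (Y η - Y t) / (η - t) := by
    simpa [slope_def_field] using hpos
  have h2 : 0 < Y η - Y t := by
    have h3 := mul_pos h1 (sub_pos.mpr hηt')
    rwa [div_mul_cancel₀ _ (ne_of_gt (sub_pos.mpr hηt'))] at h3
  have := hafter η hηt'
  rw [hYt] at h2
  linarith
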